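/- Let D ⊆ ℝ be a nonempty compact perfect set, let a = inf D and b = sup D. Then there exists a monotone nondecreasing continuous surjection f : [a,b] → [0,1] such that f(D) = [0,1], and for all x ≤ y in [a,b], f(x) = f(y) if and only if the open interval (x,y) contains no point of D. -/

import Mathlib

open MeasureTheory Set Filter Topology

lemma cantor_measure : ∃ κ : Measure (ℕ → Bool), IsProbabilityMeasure κ ∧ NullSingletonClass κ := by
  classical
  letI : TopologicalSpace (ZMod 2) := ⊥
  haveI : DiscreteTopology (ZMod 2) := ⟨rfl⟩
  haveI : IsTopologicalAddGroup (ZMod 2) :=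
    { continuous_add := continuous_of_discreteTopology
      continuous_neg := continuous_of_discreteTopology }
  set G := (ℕ → ZMod 2) with hG
  letI : MeasurableSpace G := borel G
  haveI : BorelSpace G := ⟨rfl⟩
  haveI : Fact (1 < 2) := ⟨one_lt_two⟩
  have hneb : (𝓝[≠] (0 : G)).NeBot := by
    rw [← mem_closure_iff_nhdsWithin_neBot]
    have htd : Tendsto (fun n : ℕ => (fun m => if m = n then (1 : ZMod 2) else 0 : G)) atTop (𝓝 0) := by
      rw [tendsto_pi_nhds]
      intro m
      apply Tendsto.congr' (f₁ := fun _ => (0 : ZMod 2))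
      · filter_upwards [eventually_gt_atTop m] with n hn
        simp [Nat.ne_of_lt hn]
      · exact tendsto_const_nhds
    apply mem_closure_of_tendsto htd
    filter_upwards with n
    intro h
    have h2 := congrFun h n
    rw [if_pos rfl, Pi.zero_apply] at h2
    exact one_ne_zero h2
  haveI := hneb
  set μG := Measure.addHaarMeasure (⊤ : TopologicalSpace.PositiveCompacts G) with hμG
  haveI : IsProbabilityMeasure μG := by
    constructor
    rw [← TopologicalSpace.PositiveCompacts.coe_top (α := G)]
    exact Measure.addHaarMeasure_self
  haveI : NullSingletonClass μG := inferInstance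
  -- transport to ℕ → Bool
  let e : G → (ℕ → Bool) := fun g n => finTwoEquiv (g n)
  have hecont : Continuous e :=
    continuous_pi fun n => Continuous.comp continuous_of_discreteTopology (continuous_apply n)
  have heinj : Function.Injective e := by
    intro a b hab
    funext n
    exact finTwoEquiv.injective (congrFun hab n)
  refine ⟨Measure.map e μG, Measure.isProbabilityMeasure_map hecont.measurable.aemeasurable, ?_⟩
  constructor
  intro x
  rw [Measure.map_apply hecont.measurable (measurableSet_singleton x)]
  exact Set.Subsingleton.measure_zero (fun p hp q hq => heinj (hp.trans hq.symm)) _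

lemma perfect_measure {C : Set ℝ} (hC : Perfect C) (hne : C.Nonempty) :
    ∃ ν : Measure ℝ, IsProbabilityMeasure ν ∧ NullSingletonClass ν ∧ ν Cᶜ = 0 := by
  obtain ⟨g, hrange, hcont, hinj⟩ := hC.exists_nat_bool_injection hne
  obtain ⟨κ, hκp, hκa⟩ := cantor_measure
  refine ⟨Measure.map g κ, Measure.isProbabilityMeasure_map hcont.measurable.aemeasurable, ?_, ?_⟩
  · constructor
    intro x
    rw [Measure.map_apply hcont.measurable (measurableSet_singleton x)]
    exact Set.Subsingleton.measure_zero (fun p hp q hq => hinj (hp.trans hq.symm)) _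
  · rw [Measure.map_apply hcont.measurable hC.closed.measurableSet.compl]
    have : g ⁻¹' Cᶜ = ∅ := by
      ext z
      simp only [Set.mem_preimage, Set.mem_compl_iff, Set.mem_empty_iff_false, iff_false, not_not]
      exact hrange ⟨z, rfl⟩
    rw [this, measure_empty]

lemma good_measure (D : Set ℝ) (hne : D.Nonempty) (hperf : Perfect D) :
    ∃ μ : Measure ℝ, IsProbabilityMeasure μ ∧ NullSingletonClass μ ∧ μ Dᶜ = 0 ∧
      ∀ U : Set ℝ, IsOpen U → (U ∩ D).Nonempty → 0 < μ U := by
  classical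
  set r : ℚ × ℕ → ℝ := fun i => 1 / (i.2 + 1) with hr_def
  have hr : ∀ i, 0 < r i := by
    intro i
    positivity
  have key : ∀ i : ℚ × ℕ, ∃ ν : Measure ℝ, ν Set.univ ≤ 1 ∧ NullSingletonClass ν ∧ ν Dᶜ = 0 ∧
      ((D ∩ Metric.ball (i.1 : ℝ) (r i)).Nonempty →
        ∃ x ∈ Metric.ball (i.1 : ℝ) (r i), x ∈ D ∧ ν Set.univ = 1 ∧
          ν (Metric.closedBall x (r i))ᶜ = 0) := by
    intro i
    by_cases h : (D ∩ Metric.ball (i.1 : ℝ) (r i)).Nonempty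
    · obtain ⟨x, hxD, hxB⟩ := h
      obtain ⟨hCperf, hCne⟩ := hperf.closure_nhds_inter x hxD (Metric.mem_ball_self (hr i)) Metric.isOpen_ball
      obtain ⟨ν, hνp, hνa, hνC⟩ := perfect_measure hCperf hCne
      have hsubD : closure (Metric.ball x (r i) ∩ D) ⊆ D :=
        (closure_mono Set.inter_subset_right).trans hperf.closed.closure_subset
      have hsubB : closure (Metric.ball x (r i) ∩ D) ⊆ Metric.closedBall x (r i) :=
        (closure_mono Set.inter_subset_left).trans Metric.closure_ball_subset_closedBall
      refine ⟨ν, le_of_eq hνp.measure_univ, hνa, ?_, ?_⟩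
      · exact measure_mono_null (Set.compl_subset_compl.2 hsubD) hνC
      · intro _
        refine ⟨x, hxB, hxD, hνp.measure_univ, ?_⟩
        exact measure_mono_null (Set.compl_subset_compl.2 hsubB) hνC
    · exact ⟨0, by simp, ⟨fun x => rfl⟩, by simp, fun hh => absurd hh h⟩
  choose ν hν1 hνa hνD hνball using key
  haveI := hνa
  set w : ℚ × ℕ → ENNReal := fun i => (2 : ENNReal)⁻¹ ^ (Encodable.encode i) with hw_def
  have hw_pos : ∀ i, 0 < w i := by
    intro i
    apply ENNReal.pow_pos
    simp
  have hw_sum : (∑' i, w i) ≤ 2 := by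
    calc (∑' i : ℚ × ℕ, w i) ≤ ∑' n : ℕ, (2 : ENNReal)⁻¹ ^ n :=
          ENNReal.tsum_comp_le_tsum_of_injective Encodable.encode_injective _
    _ = (1 - 2⁻¹)⁻¹ := ENNReal.tsum_geometric _
    _ ≤ 2 := by simp [ENNReal.one_sub_inv_two]
  set μ₀ : Measure ℝ := Measure.sum (fun i => w i • ν i) with hμ₀
  have hμ₀_apply : ∀ s : Set ℝ, MeasurableSet s → μ₀ s = ∑' i, w i * ν i s := by
    intro s hs
    rw [hμ₀, Measure.sum_apply _ hs]
    simp [Measure.smul_apply, smul_eq_mul]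
  have hμ₀fin : μ₀ Set.univ ≤ 2 := by
    rw [hμ₀_apply _ MeasurableSet.univ]
    calc (∑' i, w i * ν i Set.univ) ≤ ∑' i, w i * 1 :=
          ENNReal.tsum_le_tsum fun i => mul_le_mul_right (hν1 i) _
    _ ≤ 2 := by simpa using hw_sum
  haveI : IsFiniteMeasure μ₀ :=
    ⟨lt_of_le_of_lt hμ₀fin (by norm_num)⟩
  have hμ₀pos : ∀ U : Set ℝ, IsOpen U → (U ∩ D).Nonempty → 0 < μ₀ U := by
    rintro U hU ⟨z, hzU, hzD⟩
    obtain ⟨ε, hε, hball⟩ := Metric.isOpen_iff.1 hU z hzU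
    obtain ⟨k, hk⟩ := exists_nat_one_div_lt (show 0 < ε / 4 by linarith)
    obtain ⟨q, hq⟩ := exists_rat_near z (hr ((0 : ℚ), k))
    set i : ℚ × ℕ := (q, k) with hi
    have hri : r i = 1 / (k + 1) := rfl
    have hzB : z ∈ Metric.ball (q : ℝ) (r i) := by
      rw [Metric.mem_ball, Real.dist_eq, hri]
      exact hq
    obtain ⟨x, hxB, hxD, hν1', hνb⟩ := hνball i ⟨z, hzD, hzB⟩
    have hsub : Metric.closedBall x (r i) ⊆ U := by
      intro y hy
      apply hball
      rw [Metric.mem_ball]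
      have h1 : dist y x ≤ r i := Metric.mem_closedBall.1 hy
      have h2 : dist x (q : ℝ) < r i := Metric.mem_ball.1 hxB
      have h3 : dist (q : ℝ) z < r i := by
        rw [dist_comm]
        exact hzB
      have h4 : r i < ε / 4 := by
        rw [hri]
        exact_mod_cast hk
      calc dist y z ≤ dist y x + dist x (q : ℝ) + dist (q : ℝ) z := dist_triangle4 y x q z
      _ < ε / 4 + ε / 4 + ε / 4 := by linarith
      _ < ε := by linarith
    have hνU : 1 ≤ ν i U := by
      have : ν i Set.univ ≤ ν i U + ν i Uᶜ := by
        rw [← Set.union_compl_self U]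
        exact measure_union_le _ _
      have hUc : ν i Uᶜ = 0 :=
        measure_mono_null (Set.compl_subset_compl.2 hsub) hνb
      rw [hν1', hUc, add_zero] at this
      exact this
    have hle : (w i • ν i) U ≤ μ₀ U := Measure.le_sum (fun j => w j • ν j) i U
    rw [Measure.smul_apply, smul_eq_mul] at hle
    calc (0 : ENNReal) < w i * 1 := by simpa using hw_pos i
    _ ≤ w i * ν i U := mul_le_mul_right hνU _
    _ ≤ μ₀ U := hle
  haveI : NeZero μ₀ := by
    constructor
    intro h0
    obtain ⟨d, hd⟩ := hne
    have := hμ₀pos Set.univ isOpen_univ ⟨d, trivial, hd⟩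
    rw [h0] at this
    simp at this
  have hc_ne_top : μ₀ Set.univ ≠ ⊤ := (lt_of_le_of_lt hμ₀fin (by norm_num)).ne
  have hc_ne_zero : μ₀ Set.univ ≠ 0 := by
    simpa [Measure.measure_univ_eq_zero] using (NeZero.ne μ₀)
  refine ⟨(μ₀ Set.univ)⁻¹ • μ₀, inferInstance, ?_, ?_, ?_⟩
  · constructor
    intro x
    rw [Measure.smul_apply, smul_eq_mul]
    have : μ₀ {x} = 0 := by
      rw [hμ₀_apply _ (measurableSet_singleton x)]
      simp [measure_singleton]
    rw [this, mul_zero]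
  · rw [Measure.smul_apply, smul_eq_mul]
    have : μ₀ Dᶜ = 0 := by
      rw [hμ₀_apply _ hperf.closed.measurableSet.compl]
      simp [hνD]
    rw [this, mul_zero]
  · intro U hU hUD
    rw [Measure.smul_apply, smul_eq_mul]
    exact ENNReal.mul_pos (ENNReal.inv_ne_zero.2 hc_ne_top) (hμ₀pos U hU hUD).ne'

open ProbabilityTheory

/-- If `D ⊆ ℝ` is a nonempty compact perfect set with `a = inf D` and `b = sup D`, then there
is a monotone nondecreasing continuous surjection `f : [a,b] → [0,1]` with `f(D) = [0,1]`,
such that two points of `[a,b]` have the same image iff no point of `D` lies strictly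
between them. -/
theorem stmt4 (D : Set ℝ) (hne : D.Nonempty) (hcomp : IsCompact D) (hperf : Perfect D) :
    ∃ f : ℝ → ℝ, MonotoneOn f (Set.Icc (sInf D) (sSup D)) ∧
      ContinuousOn f (Set.Icc (sInf D) (sSup D)) ∧
      f '' Set.Icc (sInf D) (sSup D) = Set.Icc 0 1 ∧
      f '' D = Set.Icc 0 1 ∧
      ∀ x ∈ Set.Icc (sInf D) (sSup D), ∀ y ∈ Set.Icc (sInf D) (sSup D), x ≤ y →
        (f x = f y ↔ Set.Ioo x y ∩ D = ∅) := by
  classical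
  set a := sInf D with ha_def
  set b := sSup D with hb_def
  have haD : a ∈ D := hcomp.sInf_mem hne
  have hbD : b ∈ D := hcomp.sSup_mem hne
  have hDIcc : D ⊆ Set.Icc a b := fun d hd =>
    ⟨csInf_le hcomp.bddBelow hd, le_csSup hcomp.bddAbove hd⟩
  have hab : a < b := by
    obtain ⟨y, ⟨-, hyD⟩, hya⟩ := accPt_iff_nhds.1 (hperf.acc a haD) Set.univ Filter.univ_mem
    rcases lt_or_ge a y with h | h
    · exact lt_of_lt_of_le h (hDIcc hyD).2
    · exact absurd (le_antisymm h (hDIcc hyD).1) hya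
  obtain ⟨μ, hμp, hμa, hμD, hμpos⟩ := good_measure D hne hperf
  haveI := hμp; haveI := hμa
  set F : ℝ → ℝ := fun x => cdf μ x with hF_def
  have hmono : Monotone F := monotone_cdf μ
  have hIoc : ∀ x y : ℝ, μ (Set.Ioc x y) = ENNReal.ofReal (F y - F x) := by
    intro x y
    rw [← measure_cdf μ]
    exact (cdf μ).measure_Ioc x y
  have hsing : ∀ x : ℝ, ENNReal.ofReal (F x - Function.leftLim F x) = 0 := by
    intro x
    have h := StieltjesFunction.measure_singleton (cdf μ) x
    rw [measure_cdf μ] at h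
    rw [← h]
    exact measure_singleton x
  have hcont : Continuous F := by
    rw [continuous_iff_continuousAt]
    intro x
    rw [hmono.continuousAt_iff_leftLim_eq_rightLim]
    have h1 : Function.rightLim F x = F x := (cdf μ).rightLim_eq x
    have h2 : F x ≤ Function.leftLim F x := by
      have := hsing x
      rw [ENNReal.ofReal_eq_zero] at this
      linarith
    have h3 : Function.leftLim F x ≤ F x := hmono.leftLim_le le_rfl
    rw [h1]
    exact le_antisymm h3 h2
  have h0 : F a = 0 := by
    have hIic : μ (Set.Iic a) = 0 := by
      have hsub : Set.Iic a ⊆ {a} ∪ Dᶜ := by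
        intro z hz
        by_cases hzD : z ∈ D
        · exact Or.inl (le_antisymm hz (hDIcc hzD).1)
        · exact Or.inr hzD
      refine le_antisymm ?_ zero_le
      calc μ (Set.Iic a) ≤ μ ({a} ∪ Dᶜ) := measure_mono hsub
      _ ≤ μ {a} + μ Dᶜ := measure_union_le _ _
      _ = 0 := by rw [measure_singleton, hμD, add_zero]
    have := ofReal_cdf μ a
    rw [hIic, ENNReal.ofReal_eq_zero] at this
    exact le_antisymm this (cdf_nonneg μ a)
  have h1 : F b = 1 := by
    have hIic : μ (Set.Iic b) = 1 := by
      have hToi : μ (Set.Ioi b) = 0 := by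
        refine measure_mono_null ?_ hμD
        intro z hz hzD
        exact absurd (hDIcc hzD).2 (not_le.2 hz)
      refine le_antisymm prob_le_one ?_
      have : (1 : ENNReal) = μ (Set.Iic b ∪ Set.Ioi b) := by
        rw [Set.Iic_union_Ioi, measure_univ]
      rw [this]
      calc μ (Set.Iic b ∪ Set.Ioi b) ≤ μ (Set.Iic b) + μ (Set.Ioi b) := measure_union_le _ _
      _ = μ (Set.Iic b) := by rw [hToi, add_zero]
    have := ofReal_cdf μ b
    rw [hIic] at this
    have h01 : ENNReal.ofReal (F b) = ENNReal.ofReal 1 := by rw [this, ENNReal.ofReal_one]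
    rw [ENNReal.ofReal_eq_ofReal_iff (cdf_nonneg μ b) zero_le_one] at h01
    exact h01
  have hkey : ∀ x y : ℝ, x ≤ y → (F x = F y ↔ Set.Ioo x y ∩ D = ∅) := by
    intro x y hxy
    constructor
    · intro hFeq
      by_contra hne'
      have hpos := hμpos (Set.Ioo x y) isOpen_Ioo (Set.nonempty_iff_ne_empty.2 hne')
      have hle : μ (Set.Ioo x y) ≤ μ (Set.Ioc x y) := measure_mono Set.Ioo_subset_Ioc_self
      rw [hIoc x y, hFeq, sub_self, ENNReal.ofReal_zero] at hle
      exact absurd (le_antisymm hle zero_le) hpos.ne'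
    · intro hempty
      have hIooz : μ (Set.Ioo x y) = 0 := by
        refine measure_mono_null ?_ hμD
        intro z hz hzD
        rw [Set.eq_empty_iff_forall_notMem] at hempty
        exact hempty z ⟨hz, hzD⟩
      have hIocz : μ (Set.Ioc x y) = 0 := by
        refine le_antisymm ?_ zero_le
        have hsub : Set.Ioc x y ⊆ Set.Ioo x y ∪ {y} := by
          intro z hz
          rcases lt_or_eq_of_le hz.2 with h | h
          · exact Or.inl ⟨hz.1, h⟩
          · exact Or.inr h
        calc μ (Set.Ioc x y) ≤ μ (Set.Ioo x y ∪ {y}) := measure_mono hsub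
        _ ≤ μ (Set.Ioo x y) + μ {y} := measure_union_le _ _
        _ = 0 := by rw [hIooz, measure_singleton, add_zero]
      rw [hIoc x y, ENNReal.ofReal_eq_zero] at hIocz
      exact le_antisymm (hmono hxy) (by linarith)
  have hsurj : ∀ t ∈ Set.Icc (0 : ℝ) 1, ∃ x ∈ D, F x = t := by
    rintro t ⟨ht0, ht1⟩
    set S := Set.Icc a b ∩ F ⁻¹' Set.Ici t with hS_def
    have hSclosed : IsClosed S := isClosed_Icc.inter (isClosed_Ici.preimage hcont)
    have hbS : b ∈ S := ⟨⟨hab.le, le_rfl⟩, by simpa [Set.mem_preimage, h1] using ht1⟩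
    have hSbdd : BddBelow S := bddBelow_Icc.mono Set.inter_subset_left
    set x := sInf S with hx_def
    have hxS : x ∈ S := hSclosed.csInf_mem ⟨b, hbS⟩ hSbdd
    have hax : a ≤ x := hxS.1.1
    have hxb : x ≤ b := hxS.1.2
    have htF : t ≤ F x := hxS.2
    rcases eq_or_lt_of_le hax with heq | hlt
    · refine ⟨a, haD, ?_⟩
      rw [h0]
      rw [← heq] at htF
      rw [h0] at htF
      linarith
    · have hFxt : F x = t := by
        refine le_antisymm ?_ htF
        have htd : Filter.Tendsto F (nhdsWithin x (Set.Iio x)) (nhds (F x)) :=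
          (hcont.continuousAt).continuousWithinAt.tendsto
        refine le_of_tendsto htd ?_
        filter_upwards [Ioo_mem_nhdsLT_of_mem ⟨hlt, le_rfl⟩] with y hy
        by_contra hcon
        push_neg at hcon
        have hyS : y ∈ S := ⟨⟨hy.1.le, hy.2.le.trans hxb⟩, le_of_lt hcon⟩
        exact absurd (csInf_le hSbdd hyS) (not_le.2 hy.2)
      have hxD : x ∈ D := by
        refine hperf.closed.closure_subset ?_
        rw [Metric.mem_closure_iff]
        intro ε hε
        set y := max a (x - ε) with hy_def
        have hyx : y < x := max_lt hlt (by linarith)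
        have hyIcc : y ∈ Set.Icc a b := ⟨le_max_left _ _, (max_le hlt.le (by linarith)).trans hxb⟩
        have hFy : F y ≠ F x := by
          intro hFeq
          have hyS : y ∈ S := ⟨hyIcc, by rw [Set.mem_preimage, Set.mem_Ici, hFeq, hFxt]⟩
          exact absurd (csInf_le hSbdd hyS) (not_le.2 hyx)
        have hIoo : (Set.Ioo y x ∩ D).Nonempty := by
          rw [Set.nonempty_iff_ne_empty]
          intro hemp
          exact hFy ((hkey y x hyx.le).2 hemp)
        obtain ⟨d, hdI, hdD⟩ := hIoo
        refine ⟨d, hdD, ?_⟩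
        rw [Real.dist_eq, abs_of_pos (by linarith [hdI.2] : (0:ℝ) < x - d)]
        have : x - ε ≤ y := le_max_right _ _
        linarith [hdI.1, hdI.2]
      exact ⟨x, hxD, hFxt⟩
  have hbound : ∀ z : ℝ, F z ∈ Set.Icc (0 : ℝ) 1 := fun z => ⟨cdf_nonneg μ z, cdf_le_one μ z⟩
  have himageD : F '' D = Set.Icc 0 1 := by
    apply Set.Subset.antisymm
    · rintro _ ⟨d, _, rfl⟩
      exact hbound d
    · intro t ht
      obtain ⟨x, hxD, hFx⟩ := hsurj t ht
      exact ⟨x, hxD, hFx⟩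
  have himageI : F '' Set.Icc a b = Set.Icc 0 1 := by
    apply Set.Subset.antisymm
    · rintro _ ⟨z, _, rfl⟩
      exact hbound z
    · intro t ht
      obtain ⟨x, hxD, hFx⟩ := hsurj t ht
      exact ⟨x, hDIcc hxD, hFx⟩
  exact ⟨F, hmono.monotoneOn _, hcont.continuousOn, himageI, himageD,
    fun x _ y _ hxy => hkey x y hxy⟩
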